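/- Let H and K be finite groups, let G = H × K, and let S be a Schur partition of G such that H × 1 and 1 × K are unions of blocks of S and every block of S contained in H × 1 is a singleton. Then S is the direct product partition H × S_K; that is, the blocks of S are exactly the sets {h} × D, where h ranges over H and D ranges over the blocks of S contained in 1 × K (identified with subsets of K). -/

import Mathlib

open scoped Pointwise

/-- The class sum of a subset `C` of a group `G` in the rational group algebra `ℚ[G]`. -/
noncomputable def classSum {G : Type*} [Group G] (C : Set G) : MonoidAlgebra ℚ G :=
  ∑ᶠ g ∈ C, MonoidAlgebra.single g (1 : ℚ)

/-- A Schur partition of a group `G`: a partition containing `{1}`, closed under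
pointwise inverses, whose class sums multiply with natural-number structure constants. -/
def IsSchurPartition {G : Type*} [Group G] (P : Set (Set G)) : Prop :=
  Setoid.IsPartition P ∧
  ({1} : Set G) ∈ P ∧
  (∀ C ∈ P, C⁻¹ ∈ P) ∧
  ∀ C ∈ P, ∀ D ∈ P,
    classSum C * classSum D ∈ AddSubmonoid.closure (classSum '' P)

/-- `A` is a union of blocks of the partition `P`: every block meeting `A` lies in `A`. -/
def IsBlockUnion {G : Type*} (P : Set (Set G)) (A : Set G) : Prop :=
  ∀ C ∈ P, (C ∩ A).Nonempty → A ⊇ C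

lemma classSum_eq_sum {G : Type*} [Group G] [Finite G] (C : Set G) :
    classSum C = ∑ g ∈ C.toFinite.toFinset, MonoidAlgebra.single g (1 : ℚ) := by
  rw [classSum, ← finsum_mem_coe_finset, Set.Finite.coe_toFinset]

open Classical in
lemma classSum_apply {G : Type*} [Group G] [Finite G] (C : Set G) (x : G) :
    (classSum C).coeff x = if x ∈ C then 1 else 0 := by
  rw [classSum_eq_sum, MonoidAlgebra.coeff_sum, Finsupp.finset_sum_apply]
  simp [MonoidAlgebra.coeff_single, Finsupp.single_apply, Finset.sum_ite_eq, Set.Finite.mem_toFinset]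

lemma classSum_singleton {G : Type*} [Group G] (a : G) :
    classSum ({a} : Set G) = MonoidAlgebra.single a 1 := by
  rw [classSum]; simp [finsum_mem_singleton]

lemma single_mul_classSum {G : Type*} [Group G] [Finite G] (a : G) (B : Set G) :
    MonoidAlgebra.single a (1 : ℚ) * classSum B = classSum (a • B) := by
  refine MonoidAlgebra.coeff_injective (Finsupp.ext fun x => ?_)
  rw [MonoidAlgebra.single_mul_apply, classSum_apply, classSum_apply, one_mul]
  have hiff : a⁻¹ * x ∈ B ↔ x ∈ a • B := by
    rw [Set.mem_smul_set_iff_inv_smul_mem, smul_eq_mul]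
  by_cases h : x ∈ a • B
  · rw [if_pos h, if_pos (hiff.mpr h)]
  · rw [if_neg h, if_neg (fun hc => h (hiff.mp hc))]

/-- Blocks of a partition containing a common element coincide. -/
lemma partition_block_unique {G : Type*} {S : Set (Set G)} (hP : Setoid.IsPartition S)
    {C D : Set G} (hC : C ∈ S) (hD : D ∈ S) {g : G} (hgC : g ∈ C) (hgD : g ∈ D) :
    C = D := by
  obtain ⟨b, _, hu⟩ := hP.2 g
  rw [hu C ⟨hC, hgC⟩, hu D ⟨hD, hgD⟩]

/-- Elements of the additive closure of the class sums of the blocks of a partition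
have coefficients that are constant on each block. -/
lemma closure_const_on_blocks {G : Type*} [Group G] [Finite G] {S : Set (Set G)}
    (hP : Setoid.IsPartition S) {x : MonoidAlgebra ℚ G}
    (hx : x ∈ AddSubmonoid.closure (classSum '' S))
    {C : Set G} (hC : C ∈ S) {g g' : G} (hg : g ∈ C) (hg' : g' ∈ C) :
    x.coeff g = x.coeff g' := by
  induction hx using AddSubmonoid.closure_induction with
  | mem y hy =>
    obtain ⟨D, hD, rfl⟩ := hy
    rw [classSum_apply, classSum_apply]
    by_cases h : g ∈ D
    · rw [if_pos h, if_pos (by rwa [partition_block_unique hP hC hD hg h] at hg')]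
    · rw [if_neg h, if_neg (fun h' => h (by rwa [partition_block_unique hP hC hD hg' h'] at hg))]
  | zero => simp
  | add a b _ _ ha hb => rw [MonoidAlgebra.coeff_add, Finsupp.add_apply, Finsupp.add_apply, ha, hb]

/-- If the class sum of a set lies in the additive closure of the block class sums,
the set is a union of blocks. -/
lemma isBlockUnion_of_classSum_mem {G : Type*} [Group G] [Finite G] {S : Set (Set G)}
    (hP : Setoid.IsPartition S) {E : Set G}
    (hE : classSum E ∈ AddSubmonoid.closure (classSum '' S)) :
    IsBlockUnion S E := by
  rintro C hC ⟨g, hgC, hgE⟩ g' hg'C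
  have h := closure_const_on_blocks hP hE hC hgC hg'C
  rw [classSum_apply, classSum_apply, if_pos hgE] at h
  by_contra h'
  rw [if_neg h'] at h
  exact one_ne_zero h

/-- If `S` is a Schur partition of `H × K` such that `H × 1` and `1 × K` are unions of
blocks of `S` and all blocks inside `H × 1` are singletons, then `S` is the direct
product partition: its blocks are the sets `{h} × D` for `h ∈ H` and `D` a block of `S`
inside `1 × K`. -/
theorem schur_direct_product (H K : Type*) [Group H] [Group K] [Finite H] [Finite K]
    (S : Set (Set (H × K))) (hS : IsSchurPartition S)
    (hH : IsBlockUnion S {g : H × K | g.2 = 1})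
    (hK : IsBlockUnion S {g : H × K | g.1 = 1})
    (hdisc : ∀ C ∈ S, C ⊆ {g : H × K | g.2 = 1} → ∃ g : H × K, C = {g}) :
    S = {C : Set (H × K) | ∃ (h : H) (D : Set (H × K)), D ∈ S ∧
          D ⊆ {g : H × K | g.1 = 1} ∧
          C = (fun k : K => (h, k)) '' (Prod.snd '' D)} := by
  obtain ⟨hpart, -, -, hmul⟩ := hS
  -- nonemptiness of blocks
  have hne : ∀ C ∈ S, C.Nonempty := fun C hC =>
    Set.nonempty_iff_ne_empty.mpr (fun h => hpart.1 (h ▸ hC))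
  -- every element lies in some block
  have hcover : ∀ g : H × K, ∃ C ∈ S, g ∈ C := by
    intro g; obtain ⟨b, ⟨hb, hgb⟩, -⟩ := hpart.2 g; exact ⟨b, hb, hgb⟩
  -- each {(h,1)} is a block
  have hsing : ∀ h : H, ({((h, 1) : H × K)} : Set (H × K)) ∈ S := by
    intro h
    obtain ⟨C, hC, hmem⟩ := hcover (h, 1)
    have hCH : C ⊆ {g : H × K | g.2 = 1} := hH C hC ⟨(h, 1), hmem, rfl⟩
    obtain ⟨g, rfl⟩ := hdisc C hC hCH
    obtain rfl := Set.mem_singleton_iff.mp hmem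
    exact hC
  -- translates of blocks by singleton blocks are block unions
  have hsmul : ∀ a : H × K, ({a} : Set (H × K)) ∈ S → ∀ B ∈ S, IsBlockUnion S (a • B) := by
    intro a ha B hB
    have := hmul _ ha B hB
    rw [classSum_singleton, single_mul_classSum] at this
    exact isBlockUnion_of_classSum_mem hpart this
  -- description of translates
  have himg : ∀ D ⊆ {g : H × K | g.1 = 1}, ∀ h : H,
      ((h, 1) : H × K) • D = (fun k : K => (h, k)) '' (Prod.snd '' D) := by
    intro D hD h
    ext x
    constructor
    · rintro ⟨d, hdD, rfl⟩
      have h1 : d.1 = 1 := hD hdD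
      exact ⟨d.2, ⟨d, hdD, rfl⟩, by simp [smul_eq_mul, Prod.ext_iff, h1]⟩
    · rintro ⟨k, ⟨d, hdD, rfl⟩, rfl⟩
      have h1 : d.1 = 1 := hD hdD
      exact ⟨d, hdD, by simp [smul_eq_mul, Prod.ext_iff, h1]⟩
  -- key: translates {h}×D of blocks D ⊆ 1×K are blocks
  have keyA : ∀ D ∈ S, D ⊆ {g : H × K | g.1 = 1} → ∀ h : H,
      ((h, 1) : H × K) • D ∈ S := by
    intro D hD hDsub h
    obtain ⟨d, hd⟩ := hne D hD
    have hd1 : d = (1, d.2) := Prod.ext (hDsub hd) rfl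
    have hk : ((h, d.2) : H × K) ∈ ((h, 1) : H × K) • D :=
      ⟨d, hd, by rw [hd1]; simp [smul_eq_mul, Prod.ext_iff]⟩
    obtain ⟨C, hC, hmemC⟩ := hcover (h, d.2)
    have hCsub : C ⊆ ((h, 1) : H × K) • D :=
      hsmul _ (hsing h) D hD C hC ⟨(h, d.2), hmemC, hk⟩
    -- now show ((h,1)⁻¹) • C = D
    have hmem1 : ((1, d.2) : H × K) ∈ ((h⁻¹, 1) : H × K) • C :=
      ⟨(h, d.2), hmemC, by simp [smul_eq_mul, Prod.ext_iff]⟩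
    have hDsub' : D ⊆ ((h⁻¹, 1) : H × K) • C :=
      hsmul _ (hsing h⁻¹) C hC D hD ⟨(1, d.2), by rwa [← hd1], hmem1⟩
    have hCsub' : ((h⁻¹, 1) : H × K) • C ⊆ D := by
      intro y hy
      have : y ∈ ((h⁻¹, 1) : H × K) • (((h, 1) : H × K) • D) :=
        Set.smul_set_mono hCsub hy
      rwa [smul_smul, show ((h⁻¹, 1) : H × K) * (h, 1) = 1 by
        simp [Prod.ext_iff], one_smul] at this
    have heq : ((h⁻¹, 1) : H × K) • C = D := Set.Subset.antisymm hCsub' hDsub'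
    have : ((h, 1) : H × K) • D = C := by
      rw [← heq, smul_smul, show ((h, 1) : H × K) * (h⁻¹, 1) = 1 by
        simp [Prod.ext_iff], one_smul]
    rwa [this]
  ext C
  constructor
  · -- every block has the product form
    intro hC
    obtain ⟨⟨h, k⟩, hgk⟩ := hne C hC
    have hmemk : ((1, k) : H × K) ∈ ((h⁻¹, 1) : H × K) • C :=
      ⟨(h, k), hgk, by simp [smul_eq_mul, Prod.ext_iff]⟩
    obtain ⟨D, hD, hmemD⟩ := hcover (1, k)
    have hDsub : D ⊆ {g : H × K | g.1 = 1} := hK D hD ⟨(1, k), hmemD, rfl⟩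
    have hDsub' : D ⊆ ((h⁻¹, 1) : H × K) • C :=
      hsmul _ (hsing h⁻¹) C hC D hD ⟨(1, k), hmemD, hmemk⟩
    have hblock : ((h, 1) : H × K) • D ∈ S := keyA D hD hDsub h
    have hmem' : ((h, k) : H × K) ∈ ((h, 1) : H × K) • D :=
      ⟨(1, k), hmemD, by simp [smul_eq_mul, Prod.ext_iff]⟩
    have : C = ((h, 1) : H × K) • D :=
      partition_block_unique hpart hC hblock hgk hmem'
    exact ⟨h, D, hD, hDsub, by rw [this, himg D hDsub h]⟩
  · rintro ⟨h, D, hD, hDsub, rfl⟩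
    rw [← himg D hDsub h]
    exact keyA D hD hDsub h
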